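/- Let r > 0, Δ > 0, v > 0 be real numbers and define the adverse selection cost 𝓐(f) = v·((Δ − √(1+f)·(1+r))·(Δ² + Δ·√(1+f)·(1+r) + (1+f)·(r−2)·(r+1)) + (1+f)^{3/2}·r²·(r+1))/(3Δ). Then for every f > −1, 𝓐 is differentiable at f with derivative 𝓐′(f) = v·(1+r)·((r+2)·√(1+f) − 2Δ) / (2Δ); in particular 𝓐′(f) < 0 whenever Δ > (1+r)·√(1+f). -/

import Mathlib

/-- The adverse selection cost
`𝓐(f) = v·((Δ − √(1+f)·(1+r))·(Δ² + Δ·√(1+f)·(1+r) + (1+f)·(r−2)·(r+1)) + (1+f)^{3/2}·r²·(r+1))/(3Δ)`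
is differentiable at every `f > -1` with derivative
`v·(1+r)·((r+2)·√(1+f) − 2Δ)/(2Δ)`; in particular this derivative is negative whenever
`Δ > (1+r)·√(1+f)`. -/
theorem adverse_selection_hasDerivAt
    (r Δ v : ℝ) (hr : 0 < r) (hΔ : 0 < Δ) (hv : 0 < v)
    (f : ℝ) (hf : -1 < f) :
    HasDerivAt (fun f : ℝ =>
        v * ((Δ - Real.sqrt (1 + f) * (1 + r)) *
              (Δ ^ 2 + Δ * Real.sqrt (1 + f) * (1 + r) + (1 + f) * (r - 2) * (r + 1)) +
            (1 + f) ^ ((3 : ℝ) / 2) * r ^ 2 * (r + 1)) / (3 * Δ))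
      (v * (1 + r) * ((r + 2) * Real.sqrt (1 + f) - 2 * Δ) / (2 * Δ)) f ∧
    ((1 + r) * Real.sqrt (1 + f) < Δ →
      v * (1 + r) * ((r + 2) * Real.sqrt (1 + f) - 2 * Δ) / (2 * Δ) < 0) := by
  have hx : (0:ℝ) < 1 + f := by linarith
  set s := Real.sqrt (1 + f) with hsdef
  have hs0 : 0 < s := Real.sqrt_pos.mpr hx
  have hs2 : s ^ 2 = 1 + f := Real.sq_sqrt hx.le
  have hlin : HasDerivAt (fun f : ℝ => 1 + f) 1 f := by
    simpa using (hasDerivAt_id f).const_add (1:ℝ)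
  have hsqrt : HasDerivAt (fun f : ℝ => Real.sqrt (1 + f)) (1 / (2 * s)) f := by
    have h := (Real.hasDerivAt_sqrt hx.ne').comp f hlin
    simpa [hsdef, Function.comp_def] using h
  have hpow : HasDerivAt (fun f : ℝ => (1 + f) ^ ((3:ℝ)/2)) ((3/2) * s) f := by
    have h := (Real.hasDerivAt_rpow_const (p := (3:ℝ)/2) (Or.inl hx.ne')).comp f hlin
    have he : (1 + f) ^ ((3:ℝ)/2 - 1) = s := by
      rw [show (3:ℝ)/2 - 1 = 1/2 by norm_num, hsdef, Real.sqrt_eq_rpow]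
    simpa [Function.comp_def, he] using h
  have h1 : HasDerivAt (fun f : ℝ => Δ - Real.sqrt (1 + f) * (1 + r))
      (-(1 / (2 * s) * (1 + r))) f := (hsqrt.mul_const (1 + r)).const_sub Δ
  have hb : HasDerivAt (fun f : ℝ => Δ * Real.sqrt (1 + f) * (1 + r))
      (Δ * (1 / (2 * s)) * (1 + r)) f := (hsqrt.const_mul Δ).mul_const (1 + r)
  have hc : HasDerivAt (fun f : ℝ => (1 + f) * (r - 2) * (r + 1))
      (1 * (r - 2) * (r + 1)) f := (hlin.mul_const (r - 2)).mul_const (r + 1)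
  have h2 : HasDerivAt (fun f : ℝ =>
      Δ ^ 2 + Δ * Real.sqrt (1 + f) * (1 + r) + (1 + f) * (r - 2) * (r + 1))
      (0 + Δ * (1 / (2 * s)) * (1 + r) + 1 * (r - 2) * (r + 1)) f :=
    ((hasDerivAt_const f (Δ ^ 2)).add hb).add hc
  have hB : HasDerivAt (fun f : ℝ => (1 + f) ^ ((3:ℝ)/2) * r ^ 2 * (r + 1))
      ((3/2) * s * r ^ 2 * (r + 1)) f := (hpow.mul_const (r ^ 2)).mul_const (r + 1)
  have hg := ((h1.mul h2).add hB)
  have hmain := (hg.const_mul v).div_const (3 * Δ)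
  constructor
  · refine HasDerivAt.congr_deriv hmain ?_
    have hs0' : s ≠ 0 := hs0.ne'
    have hΔ' : (Δ:ℝ) ≠ 0 := hΔ.ne'
    rw [← hsdef, ← hs2]
    field_simp
    ring
  · intro h
    have hsΔ : s < Δ := by nlinarith
    apply div_neg_of_neg_of_pos
    · have h3 : (r + 2) * s < 2 * Δ := by nlinarith
      have h4 : (0:ℝ) < 1 + r := by linarith
      nlinarith [mul_pos (mul_pos hv h4) (sub_pos.mpr h3)]
    · linarith
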